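/- Let A be a 4-dimensional real vector space, let J : A → A be a linear map with J∘J = −id, let ω be a real alternating 2-form on A satisfying ω(Jv, Jw) = ω(v,w) for all v,w ∈ A and ω(v, Jv) > 0 for all v ≠ 0, and let Ω : A × A → ℂ be a nonzero ℝ-bilinear alternating map satisfying Ω(Jv, w) = i·Ω(v,w) for all v,w ∈ A. Then there exist a real number ν > 0 and a basis (e₁,e₂,e₃,e₄) of A with dual basis (f¹,f²,f³,f⁴) such that: (f¹+if²)(Jv) = i·(f¹+if²)(v) and (f³+if⁴)(Jv) = i·(f³+if⁴)(v) for all v ∈ A; ω = f¹∧f² + f³∧f⁴; Re Ω = ν⁻¹(f¹∧f³ − f²∧f⁴); and Im Ω = ν⁻¹(f¹∧f⁴ + f²∧f³). -/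

import Mathlib

theorem aux_basis
    {A : Type*} [AddCommGroup A] [Module ℝ A] [FiniteDimensional ℝ A]
    (hdim : Module.finrank ℝ A = 4)
    (J : A →ₗ[ℝ] A) (hJ' : ∀ v, J (J v) = -v)
    (ω : A →ₗ[ℝ] A →ₗ[ℝ] ℝ)
    (halt : ∀ v, ω v v = 0)
    (hanti : ∀ v w, ω w v = -ω v w)
    (hωJ : ∀ v w, ω (J v) (J w) = ω v w)
    (a b : A)
    (haa : ω a (J a) = 1) (hbb : ω b (J b) = 1)
    (hba : ω b (J a) = 0) (hab : ω a b = 0) :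
    ∃ e : Module.Basis (Fin 4) ℝ A,
      (∀ i, e i = ![a, J a, b, J b] i) ∧
      (∀ j v, e.repr v j = ω v (J (![a, J a, b, J b] j))) := by
  set E : Fin 4 → A := ![a, J a, b, J b] with hE
  have gJJ : ∀ v w, ω v (J (J w)) = -ω v w := by
    intro v w; rw [hJ' w, map_neg]
  have gsymm : ∀ v w, ω v (J w) = ω w (J v) := by
    intro v w
    have h1 : ω (J w) (J (J v)) = ω w (J v) := hωJ w (J v)
    rw [gJJ (J w) v] at h1
    rw [← h1, hanti]
  have hba' : ω b a = 0 := by rw [hanti, hab, neg_zero]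
  have gram : ∀ i j, ω (E i) (J (E j)) = if i = j then 1 else 0 := by
    intro i j
    have g01 : ω a (J (J a)) = 0 := by rw [gJJ, halt, neg_zero]
    have g02 : ω a (J b) = 0 := by rw [gsymm, hba]
    have g03 : ω a (J (J b)) = 0 := by rw [gJJ, hab, neg_zero]
    have g10 : ω (J a) (J a) = 0 := by rw [hωJ, halt]
    have g11 : ω (J a) (J (J a)) = 1 := by rw [hωJ a (J a), haa]
    have g12 : ω (J a) (J b) = 0 := by rw [gsymm, gJJ, hba', neg_zero]
    have g13 : ω (J a) (J (J b)) = 0 := by rw [hωJ a (J b), g02]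
    have g21 : ω b (J (J a)) = 0 := by rw [gJJ, hba', neg_zero]
    have g23 : ω b (J (J b)) = 0 := by rw [gJJ, halt, neg_zero]
    have g30 : ω (J b) (J a) = 0 := by rw [hωJ, hba']
    have g31 : ω (J b) (J (J a)) = 0 := by rw [hωJ b (J a), hba]
    have g32 : ω (J b) (J b) = 0 := by rw [hωJ, halt]
    have g33 : ω (J b) (J (J b)) = 1 := by rw [hωJ b (J b), hbb]
    fin_cases i <;> fin_cases j <;>
      simp [hE, haa, hbb, hba, g01, g02, g03, g10, g11, g12, g13, g21, g23, g30, g31, g32, g33]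
  have li : LinearIndependent ℝ E := by
    rw [Fintype.linearIndependent_iff]
    intro c hc j
    have h := congrArg (fun x => ω x (J (E j))) hc
    simp only [map_sum, map_smul, LinearMap.sum_apply, LinearMap.smul_apply, smul_eq_mul,
      map_zero, LinearMap.zero_apply] at h
    simp only [gram, mul_ite, mul_one, mul_zero, Finset.sum_ite_eq', Finset.mem_univ,
      if_true] at h
    exact h
  have hcard : Fintype.card (Fin 4) = Module.finrank ℝ A := by simp [hdim]
  refine ⟨basisOfLinearIndependentOfCardEqFinrank li hcard, ?_, ?_⟩
  · intro i; rw [coe_basisOfLinearIndependentOfCardEqFinrank]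
  · intro j v
    set e := basisOfLinearIndependentOfCardEqFinrank li hcard with he
    have hcoe : ⇑e = E := coe_basisOfLinearIndependentOfCardEqFinrank li hcard
    have hv := e.sum_repr v
    calc e.repr v j = ∑ i, e.repr v i * ω (E i) (J (E j)) := by
          simp only [gram, mul_ite, mul_one, mul_zero, Finset.sum_ite_eq', Finset.mem_univ,
            if_true]
      _ = ω v (J (E j)) := by
          conv_rhs => rw [← hv]
          simp [map_sum, hcoe]

set_option maxHeartbeats 2000000 in
theorem statement4
    (A : Type*) [AddCommGroup A] [Module ℝ A] [FiniteDimensional ℝ A]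
    (hdim : Module.finrank ℝ A = 4)
    (J : A →ₗ[ℝ] A) (hJ : J ∘ₗ J = -LinearMap.id)
    (ω : A →ₗ[ℝ] A →ₗ[ℝ] ℝ)
    (hω_alt : ∀ v, ω v v = 0)
    (hω_J : ∀ v w, ω (J v) (J w) = ω v w)
    (hω_pos : ∀ v : A, v ≠ 0 → 0 < ω v (J v))
    (Ω : A →ₗ[ℝ] A →ₗ[ℝ] ℂ)
    (hΩ_alt : ∀ v, Ω v v = 0)
    (hΩ_ne : Ω ≠ 0)
    (hΩ_J : ∀ v w, Ω (J v) w = Complex.I * Ω v w) :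
    ∃ ν : ℝ, 0 < ν ∧ ∃ e : Module.Basis (Fin 4) ℝ A,
      (∀ v : A, ((e.coord 0 (J v) : ℂ) + Complex.I * (e.coord 1 (J v) : ℂ)) =
          Complex.I * ((e.coord 0 v : ℂ) + Complex.I * (e.coord 1 v : ℂ))) ∧
      (∀ v : A, ((e.coord 2 (J v) : ℂ) + Complex.I * (e.coord 3 (J v) : ℂ)) =
          Complex.I * ((e.coord 2 v : ℂ) + Complex.I * (e.coord 3 v : ℂ))) ∧
      (∀ v w : A, ω v w =
          (e.coord 0 v * e.coord 1 w - e.coord 0 w * e.coord 1 v) +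
          (e.coord 2 v * e.coord 3 w - e.coord 2 w * e.coord 3 v)) ∧
      (∀ v w : A, (Ω v w).re = ν⁻¹ *
          ((e.coord 0 v * e.coord 2 w - e.coord 0 w * e.coord 2 v) -
           (e.coord 1 v * e.coord 3 w - e.coord 1 w * e.coord 3 v))) ∧
      (∀ v w : A, (Ω v w).im = ν⁻¹ *
          ((e.coord 0 v * e.coord 3 w - e.coord 0 w * e.coord 3 v) +
           (e.coord 1 v * e.coord 2 w - e.coord 1 w * e.coord 2 v))) := by
  have hJ' : ∀ v, J (J v) = -v := by
    intro v
    have := LinearMap.ext_iff.mp hJ v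
    simpa using this
  have hanti : ∀ v w, ω w v = -ω v w := by
    intro v w
    have h := hω_alt (v + w)
    simp only [map_add, LinearMap.add_apply, hω_alt] at h
    linarith
  have gJJ : ∀ v w, ω v (J (J w)) = -ω v w := fun v w => by rw [hJ' w, map_neg]
  have gsymm : ∀ v w, ω v (J w) = ω w (J v) := by
    intro v w
    have h1 : ω (J w) (J (J v)) = ω w (J v) := hω_J w (J v)
    rw [gJJ (J w) v] at h1
    rw [← h1, hanti]
  have hΩ_anti : ∀ v w, Ω w v = -Ω v w := by
    intro v w
    have h := hΩ_alt (v + w)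
    simp only [map_add, LinearMap.add_apply, hΩ_alt] at h
    linear_combination h
  have hΩ_J2 : ∀ v w, Ω v (J w) = Complex.I * Ω v w := by
    intro v w
    rw [hΩ_anti (J w) v, hΩ_J w v, hΩ_anti w v]
    ring
  -- normalization helper
  have norm_fact : ∀ x : A, x ≠ 0 →
      ω ((Real.sqrt (ω x (J x)))⁻¹ • x) (J ((Real.sqrt (ω x (J x)))⁻¹ • x)) = 1 := by
    intro x hx
    have hp := hω_pos x hx
    have hs : Real.sqrt (ω x (J x)) ^ 2 = ω x (J x) := Real.sq_sqrt hp.le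
    have hs0 : Real.sqrt (ω x (J x)) ≠ 0 := by positivity
    simp only [map_smul, LinearMap.smul_apply, smul_eq_mul]
    field_simp
    exact hs.symm
  have : Nontrivial A := by
    apply Module.nontrivial_of_finrank_pos (R := ℝ)
    omega
  obtain ⟨v₀, hv₀⟩ := exists_ne (0 : A)
  set e₁ : A := (Real.sqrt (ω v₀ (J v₀)))⁻¹ • v₀ with he₁
  have haa : ω e₁ (J e₁) = 1 := by rw [he₁]; exact norm_fact v₀ hv₀
  clear_value e₁
  -- find u orthogonal to e₁, J e₁
  set L : A →ₗ[ℝ] ℝ × ℝ := LinearMap.prod (ω.flip (J e₁)) (ω.flip (J (J e₁))) with hL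
  have hLni : ¬ Function.Injective L := by
    intro h
    have h2 := LinearMap.finrank_le_finrank_of_injective h
    rw [hdim] at h2
    have : Module.finrank ℝ (ℝ × ℝ) = 2 := by simp
    omega
  have hker : LinearMap.ker L ≠ ⊥ := fun h => hLni (LinearMap.ker_eq_bot.mp h)
  obtain ⟨u, huker, hu0⟩ := Submodule.exists_mem_ne_zero_of_ne_bot hker
  have hLu : L u = 0 := LinearMap.mem_ker.mp huker
  have hu1 : ω u (J e₁) = 0 := by
    have := congrArg Prod.fst hLu
    simpa [hL, LinearMap.prod_apply, LinearMap.flip_apply] using this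
  have hu2 : ω u (J (J e₁)) = 0 := by
    have := congrArg Prod.snd hLu
    simpa [hL, LinearMap.prod_apply, LinearMap.flip_apply] using this
  clear hLu huker hker hLni
  clear hL
  clear L
  have hue1 : ω u e₁ = 0 := by
    have := hu2; rw [gJJ] at this; linarith
  set b3 : A := (Real.sqrt (ω u (J u)))⁻¹ • u with hb3
  have hbb1 : ω b3 (J b3) = 1 := by rw [hb3]; exact norm_fact u hu0
  have hba1 : ω b3 (J e₁) = 0 := by
    rw [hb3, map_smul, LinearMap.smul_apply, smul_eq_mul, hu1, mul_zero]
  have hb3e1 : ω b3 e₁ = 0 := by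
    rw [hb3, map_smul, LinearMap.smul_apply, smul_eq_mul, hue1, mul_zero]
  have hab1 : ω e₁ b3 = 0 := by rw [hanti b3 e₁, hb3e1, neg_zero]
  clear_value b3
  obtain ⟨b1, hb1coe, hb1repr⟩ :=
    aux_basis hdim J hJ' ω hω_alt hanti hω_J e₁ b3 haa hbb1 hba1 hab1
  set c₀ : ℂ := Ω e₁ b3 with hc₀def
  have hc₀ : c₀ ≠ 0 := by
    intro h0
    apply hΩ_ne
    have z2 : Ω b3 e₁ = 0 := by rw [hΩ_anti e₁ b3, ← hc₀def, h0, neg_zero]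
    refine b1.ext fun i => b1.ext fun j => ?_
    have h0' : Ω e₁ b3 = 0 := h0
    fin_cases i <;> fin_cases j <;>
      simp [hb1coe, hΩ_alt, hΩ_J, hΩ_J2, h0', z2]
  set r : ℝ := ‖c₀‖ with hrdef
  have hr : 0 < r := norm_pos_iff.mpr hc₀
  have habs : c₀.re ^ 2 + c₀.im ^ 2 = r ^ 2 := by
    rw [hrdef, Complex.sq_norm, Complex.normSq_apply]; ring
  clear_value c₀ r
  set a : ℝ := c₀.re with ha
  set b : ℝ := c₀.im with hb
  have h3 : c₀ = (a : ℂ) + (b : ℂ) * Complex.I := by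
    rw [ha, hb]; exact (Complex.re_add_im c₀).symm
  clear_value a b
  set p : ℝ := r⁻¹ * a with hp
  set q : ℝ := -(r⁻¹ * b) with hq
  clear_value p q
  set e₃ : A := p • b3 + q • (J b3) with he₃
  clear_value e₃
  -- gram facts for the b3 frame
  have w1 : ω b3 (J (J b3)) = 0 := by rw [gJJ, hω_alt, neg_zero]
  have w2 : ω (J b3) (J b3) = 0 := by rw [hω_J, hω_alt]
  have w3 : ω (J b3) (J (J b3)) = 1 := by rw [hω_J b3 (J b3), hbb1]
  have w4 : ω e₁ (J b3) = 0 := by rw [gsymm, hba1]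
  have w5 : ω (J b3) (J e₁) = 0 := by rw [hω_J, hb3e1]
  have hbb2 : ω e₃ (J e₃) = 1 := by
    have hexp : ω e₃ (J e₃) = p * (p * ω b3 (J b3)) + p * (q * ω b3 (J (J b3)))
        + (q * (p * ω (J b3) (J b3)) + q * (q * ω (J b3) (J (J b3)))) := by
      rw [he₃]
      simp only [map_add, map_smul, LinearMap.add_apply, LinearMap.smul_apply, smul_eq_mul]
      ring
    rw [hexp, hbb1, w1, w2, w3]
    have : p ^ 2 + q ^ 2 = 1 := by
      rw [hp, hq]
      field_simp
      nlinarith [habs]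
    linear_combination this
  have hba2 : ω e₃ (J e₁) = 0 := by
    rw [he₃]
    simp only [map_add, map_smul, LinearMap.add_apply, LinearMap.smul_apply, smul_eq_mul]
    rw [hba1, w5]
    ring
  have hab2 : ω e₁ e₃ = 0 := by
    rw [he₃]
    simp only [map_add, map_smul, smul_eq_mul]
    rw [hab1, w4]
    ring
  obtain ⟨e, hcoe, hrepr⟩ :=
    aux_basis hdim J hJ' ω hω_alt hanti hω_J e₁ e₃ haa hbb2 hba2 hab2
  -- the key value of Ω
  have hΩ13 : Ω e₁ e₃ = (r : ℂ) := by
    have hexp : Ω e₁ e₃ = (p : ℂ) * c₀ + (q : ℂ) * (Complex.I * c₀) := by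
      rw [he₃]
      simp only [map_add, map_smul, Complex.real_smul, hΩ_J2, ← hc₀def]
    rw [hexp]
    have h4 : ((a : ℂ))^2 + ((b : ℂ))^2 = ((r : ℂ))^2 := by exact_mod_cast habs
    have h5 : (r : ℂ) * ((r : ℂ))⁻¹ = 1 := mul_inv_cancel₀ (by exact_mod_cast hr.ne')
    rw [hp, hq, h3]
    push_cast
    linear_combination ((r:ℂ))⁻¹ * h4 + (r:ℂ) * h5 +
      (-(((r:ℂ))⁻¹) * ((b:ℂ))^2) * Complex.I_sq
  have hΩ31 : Ω e₃ e₁ = -(r : ℂ) := by rw [hΩ_anti e₁ e₃, hΩ13]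
  -- basis vectors
  have he0 : e 0 = e₁ := by rw [hcoe 0]; rfl
  have he1 : e 1 = J e₁ := by rw [hcoe 1]; rfl
  have he2 : e 2 = e₃ := by rw [hcoe 2]; rfl
  have he3 : e 3 = J e₃ := by rw [hcoe 3]; rfl
  -- repr formulas
  have hr0 : ∀ v, e.repr v 0 = ω v (J e₁) := fun v => hrepr 0 v
  have hr1 : ∀ v, e.repr v 1 = ω v (J (J e₁)) := fun v => hrepr 1 v
  have hr2 : ∀ v, e.repr v 2 = ω v (J e₃) := fun v => hrepr 2 v
  have hr3 : ∀ v, e.repr v 3 = ω v (J (J e₃)) := fun v => hrepr 3 v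
  refine ⟨r⁻¹, by positivity, e, ?_, ?_, ?_, ?_, ?_⟩
  · intro v
    have h0 : e.repr (J v) 0 = -(e.repr v 1) := by
      rw [hr0, hr1, hω_J, gJJ]; ring
    have h1 : e.repr (J v) 1 = e.repr v 0 := by
      rw [hr1, hr0]; exact hω_J v (J e₁)
    simp only [Module.Basis.coord_apply, h0, h1]
    push_cast
    linear_combination (-(((e.repr v 1 : ℝ) : ℂ))) * Complex.I_sq
  · intro v
    have h2 : e.repr (J v) 2 = -(e.repr v 3) := by
      rw [hr2, hr3, hω_J, gJJ]; ring
    have h3 : e.repr (J v) 3 = e.repr v 2 := by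
      rw [hr3, hr2]; exact hω_J v (J e₃)
    simp only [Module.Basis.coord_apply, h2, h3]
    push_cast
    linear_combination (-(((e.repr v 3 : ℝ) : ℂ))) * Complex.I_sq
  · -- ω formula
    intro v w
    -- table
    have t01 : ω e₁ (J e₁) = 1 := haa
    have t10 : ω (J e₁) e₁ = -1 := by rw [hanti e₁ (J e₁), haa]
    have t02 : ω e₁ e₃ = 0 := hab2
    have t03 : ω e₁ (J e₃) = 0 := by rw [gsymm, hba2]
    have t12 : ω (J e₁) e₃ = 0 := by rw [hanti e₃ (J e₁), hba2, neg_zero]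
    have t20 : ω e₃ e₁ = 0 := by rw [hanti e₁ e₃, hab2, neg_zero]
    have t21 : ω e₃ (J e₁) = 0 := hba2
    have t23 : ω e₃ (J e₃) = 1 := hbb2
    have t30 : ω (J e₃) e₁ = 0 := by rw [hanti e₁ (J e₃), t03, neg_zero]
    have t32 : ω (J e₃) e₃ = -1 := by rw [hanti e₃ (J e₃), hbb2]
    have expand : ω v w = ∑ j, ∑ i, e.repr w j * (e.repr v i * ω (e i) (e j)) := by
      conv_lhs => rw [← e.sum_repr v, ← e.sum_repr w]
      simp only [map_sum, map_smul, LinearMap.sum_apply, LinearMap.smul_apply, smul_eq_mul,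
        Finset.mul_sum]
    rw [expand]
    simp only [Fin.sum_univ_four, he0, he1, he2, he3]
    simp only [hω_alt, hω_J, t01, t10, t02, t03, t12, t20, t21, t23, t30, t32,
      Module.Basis.coord_apply]
    ring
  · -- Re Ω
    intro v w
    have s02 : Ω e₁ e₃ = (r : ℂ) := hΩ13
    have s20 : Ω e₃ e₁ = -(r : ℂ) := hΩ31
    have expand : Ω v w = ∑ j, ∑ i, e.repr w j • e.repr v i • Ω (e i) (e j) := by
      conv_lhs => rw [← e.sum_repr v, ← e.sum_repr w]
      simp only [map_sum, map_smul, LinearMap.sum_apply, LinearMap.smul_apply,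
        Finset.smul_sum]
    rw [expand]
    simp only [Fin.sum_univ_four, he0, he1, he2, he3]
    simp only [hΩ_alt, hΩ_J, hΩ_J2, s02, s20, Complex.real_smul]
    rw [inv_inv]
    simp only [Module.Basis.coord_apply]
    simp [Complex.add_re, Complex.mul_re, Complex.mul_im, Complex.I_re, Complex.I_im,
      Complex.ofReal_re, Complex.ofReal_im, Complex.neg_re, Complex.neg_im]
    ring
  · -- Im Ω
    intro v w
    have s02 : Ω e₁ e₃ = (r : ℂ) := hΩ13
    have s20 : Ω e₃ e₁ = -(r : ℂ) := hΩ31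
    have expand : Ω v w = ∑ j, ∑ i, e.repr w j • e.repr v i • Ω (e i) (e j) := by
      conv_lhs => rw [← e.sum_repr v, ← e.sum_repr w]
      simp only [map_sum, map_smul, LinearMap.sum_apply, LinearMap.smul_apply,
        Finset.smul_sum]
    rw [expand]
    simp only [Fin.sum_univ_four, he0, he1, he2, he3]
    simp only [hΩ_alt, hΩ_J, hΩ_J2, s02, s20, Complex.real_smul]
    rw [inv_inv]
    simp only [Module.Basis.coord_apply]
    simp [Complex.add_im, Complex.mul_re, Complex.mul_im, Complex.I_re, Complex.I_im,
      Complex.ofReal_re, Complex.ofReal_im, Complex.neg_re, Complex.neg_im]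
    ring
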